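/- arXiv:1902.08493 — 2 statements merged into one kernel-verified Lean document; each statement's English description precedes it below -/
import Mathlib

section
/- For every vertex v of the Grandparent graph GP: every automorphism of GP fixing v also fixes p(v), so the orbit of p(v) under the stabilizer Aut(GP)_v has exactly 1 element, while the orbit of v under the stabilizer Aut(GP)_{p(v)} has exactly 2 elements. In particular the action of Aut(GP) on GP is not unimodular. -/
open Filter Finset

noncomputable section

variable {V : Type*}

/-- `w : ℕ → V` represents a walk of length `n` from `v`: consecutive vertices are
adjacent and the values are pinned to `w n` from index `n` on. -/
noncomputable def IsWalkFrom (G : SimpleGraph V) (n : ℕ) (v : V) (w : ℕ → V) : Prop :=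
  w 0 = v ∧ (∀ i < n, G.Adj (w i) (w (i + 1))) ∧ (∀ i, n ≤ i → w i = w n)

/-- A self-avoiding walk of length `n` starting at `v`. -/
noncomputable def IsSAWFrom (G : SimpleGraph V) (n : ℕ) (v : V) (w : ℕ → V) : Prop :=
  IsWalkFrom G n v w ∧ Set.InjOn w (Set.Iic n)

/-- A bridge with respect to the height function `h`. -/
noncomputable def IsBridgeFrom (G : SimpleGraph V) (h : V → ℤ) (n : ℕ) (v : V) (w : ℕ → V) : Prop :=
  IsSAWFrom G n v w ∧ ∀ i, 1 ≤ i → i ≤ n → h (w 0) < h (w i) ∧ h (w i) ≤ h (w n)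

/-- A reversed bridge with respect to the height function `h`. -/
noncomputable def IsRBridgeFrom (G : SimpleGraph V) (h : V → ℤ) (n : ℕ) (v : V) (w : ℕ → V) : Prop :=
  IsSAWFrom G n v w ∧ ∀ i, 1 ≤ i → i ≤ n → h (w 0) > h (w i) ∧ h (w i) ≥ h (w n)

/-- A half-space walk with respect to the height function `h`. -/
noncomputable def IsHSWFrom (G : SimpleGraph V) (h : V → ℤ) (n : ℕ) (v : V) (w : ℕ → V) : Prop :=
  IsSAWFrom G n v w ∧ ∀ i, 1 ≤ i → i ≤ n → h (w 0) < h (w i)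

/-- The span of (the first `n+1` vertices of) a walk. -/
noncomputable def walkSpan (h : V → ℤ) (n : ℕ) (w : ℕ → V) : ℤ :=
  ((Finset.range (n + 1)).sup' ⟨0, by simp⟩ fun i => h (w i)) -
    ((Finset.range (n + 1)).inf' ⟨0, by simp⟩ fun i => h (w i))

/-- Number of SAWs of length `n` starting at `v`. -/
noncomputable def sawCount (G : SimpleGraph V) (n : ℕ) (v : V) : ℕ :=
  Nat.card {w : ℕ → V // IsSAWFrom G n v w}

/-- Number of bridges of length `n` starting at `v`. -/
noncomputable def bridgeCount (G : SimpleGraph V) (h : V → ℤ) (n : ℕ) (v : V) : ℕ :=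
  Nat.card {w : ℕ → V // IsBridgeFrom G h n v w}

/-- Number of reversed bridges of length `n` starting at `v`. -/
noncomputable def rbridgeCount (G : SimpleGraph V) (h : V → ℤ) (n : ℕ) (v : V) : ℕ :=
  Nat.card {w : ℕ → V // IsRBridgeFrom G h n v w}

/-- Number of half-space walks of length `n` starting at `v`. -/
noncomputable def hswCount (G : SimpleGraph V) (h : V → ℤ) (n : ℕ) (v : V) : ℕ :=
  Nat.card {w : ℕ → V // IsHSWFrom G h n v w}

/-- Number of bridges of length `n` and span `a` starting at `v`. -/
noncomputable def bridgeSpanCount (G : SimpleGraph V) (h : V → ℤ) (n : ℕ) (v : V) (a : ℤ) : ℕ :=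
  Nat.card {w : ℕ → V // IsBridgeFrom G h n v w ∧ walkSpan h n w = a}

/-- Number of reversed bridges of length `n` and span `a` starting at `v`. -/
noncomputable def rbridgeSpanCount (G : SimpleGraph V) (h : V → ℤ) (n : ℕ) (v : V) (a : ℤ) : ℕ :=
  Nat.card {w : ℕ → V // IsRBridgeFrom G h n v w ∧ walkSpan h n w = a}

/-- `c_n`: maximal number of SAWs of length `n` over all starting vertices. -/
noncomputable def sawSup (G : SimpleGraph V) (n : ℕ) : ℕ :=
  sSup {m | ∃ v : V, m = sawCount G n v}

/-- `b_n`: minimal number of bridges of length `n` over all starting vertices. -/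
noncomputable def bridgeInf (G : SimpleGraph V) (h : V → ℤ) (n : ℕ) : ℕ :=
  sInf {m | ∃ v : V, m = bridgeCount G h n v}

/-- `b̄_n`: minimal number of reversed bridges of length `n` over all starting vertices. -/
noncomputable def rbridgeInf (G : SimpleGraph V) (h : V → ℤ) (n : ℕ) : ℕ :=
  sInf {m | ∃ v : V, m = rbridgeCount G h n v}

/-- `idx` together with the spans `a` form the canonical decomposition of the walk `w`
of length `n` into an alternating sequence of `k` bridges and reversed bridges. -/
noncomputable def IsCanonicalDecomp (h : V → ℤ) (n : ℕ) (w : ℕ → V) (k : ℕ) (a : ℕ → ℤ)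
    (idx : ℕ → ℕ) : Prop :=
  idx 0 = 0 ∧ idx k = n ∧
  ∀ j, 1 ≤ j → j ≤ k →
    idx (j - 1) < idx j ∧ idx j ≤ n ∧
    a j = |h (w (idx j)) - h (w (idx (j - 1)))| ∧
    (∀ i, idx (j - 1) ≤ i → i ≤ n → |h (w i) - h (w (idx (j - 1)))| ≤ a j) ∧
    (∀ i, idx j < i → i ≤ n → |h (w i) - h (w (idx (j - 1)))| < a j)

/-- `h_{n,v}(a_1,…,a_k)`: number of half-space walks of length `n` from `v` whose
canonical decomposition has span sequence `a 1, …, a k`. -/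
noncomputable def hswSeqCount (G : SimpleGraph V) (h : V → ℤ) (n : ℕ) (v : V) (k : ℕ)
    (a : ℕ → ℤ) : ℕ :=
  Nat.card {w : ℕ → V // IsHSWFrom G h n v w ∧ ∃ idx : ℕ → ℕ,
    IsCanonicalDecomp h n w k a idx}

/-- The group `Γ` acts quasi-transitively. -/
noncomputable def QuasiTransitiveSub (G : SimpleGraph V) (Γ : Subgroup (G ≃g G)) : Prop :=
  ∃ S : Finset V, ∀ v : V, ∃ γ ∈ Γ, ∃ s ∈ S, γ s = v

/-- The graph `G` is quasi-transitive. -/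
noncomputable def QuasiTransitive (G : SimpleGraph V) : Prop :=
  ∃ S : Finset V, ∀ v : V, ∃ γ : G ≃g G, ∃ s ∈ S, γ s = v

/-- `(h, Γ)` is a graph height function on `G`. -/
noncomputable def IsGraphHeightFunction (G : SimpleGraph V) (h : V → ℤ) (Γ : Subgroup (G ≃g G)) : Prop :=
  QuasiTransitiveSub G Γ ∧
  (∀ γ ∈ Γ, ∀ u v : V, h (γ v) - h (γ u) = h v - h u) ∧
  (∀ v : V, ∃ u w : V, G.Adj v u ∧ G.Adj v w ∧ h u < h v ∧ h v < h w)

/-- `P_D A`: number of partitions of `A` into distinct parts. -/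
noncomputable def distinctPartitionCount (A : ℕ) : ℕ := (Nat.Partition.distincts A).card

noncomputable def bridgeBeta (G : SimpleGraph V) (h : V → ℤ) : ℝ :=
  Filter.limsup (fun n : ℕ => (bridgeInf G h n : ℝ) ^ (1 / (n : ℝ))) atTop

noncomputable def rbridgeBeta (G : SimpleGraph V) (h : V → ℤ) : ℝ :=
  Filter.limsup (fun n : ℕ => (rbridgeInf G h n : ℝ) ^ (1 / (n : ℝ))) atTop

noncomputable def betaMax (G : SimpleGraph V) (h : V → ℤ) : ℝ :=
  max (bridgeBeta G h) (rbridgeBeta G h)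
/-- Vertices of the Grandparent graph: pairs `(k, f)` where `f i = false` for `i ≥ k`
and for all sufficiently small `i`. -/
def GPVertex : Type :=
  {p : ℤ × (ℤ → Bool) // (∀ i, p.1 ≤ i → p.2 i = false) ∧ ∃ N : ℤ, ∀ i ≤ N, p.2 i = false}

/-- The predecessor map of the Grandparent graph. -/
def GPpred (v : GPVertex) : GPVertex :=
  ⟨(v.val.1 - 1, fun i => if i = v.val.1 - 1 then false else v.val.2 i), by
    constructor
    · intro i hi
      dsimp only at hi ⊢
      split
      · rfl
      · exact v.prop.1 i (by omega)
    · obtain ⟨N, hN⟩ := v.prop.2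
      refine ⟨N, fun i hi => ?_⟩
      dsimp only
      split
      · rfl
      · exact hN i hi⟩

/-- The Grandparent graph. -/
def GP : SimpleGraph GPVertex where
  Adj u v := u ≠ v ∧
    (u = GPpred v ∨ v = GPpred u ∨ u = GPpred (GPpred v) ∨ v = GPpred (GPpred u))
  symm := by
    constructor
    intro u v hv
    exact ⟨Ne.symm hv.1, by tauto⟩
  loopless := by
    constructor
    intro u hu
    exact hu.1 rfl

/-- The height of a vertex of the Grandparent graph. -/
def GPheight (v : GPVertex) : ℤ := v.val.1

namespace GPAux

lemma pred_fst (v : GPVertex) : (GPpred v).val.1 = v.val.1 - 1 := rfl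

lemma pred_snd (v : GPVertex) (i : ℤ) :
    (GPpred v).val.2 i = if i = v.val.1 - 1 then false else v.val.2 i := rfl

lemma vext {a b : GPVertex} (h1 : a.val.1 = b.val.1) (h2 : ∀ i, a.val.2 i = b.val.2 i) :
    a = b := Subtype.ext (Prod.ext h1 (funext h2))

lemma ne_of_fst {a b : GPVertex} (h : a.val.1 ≠ b.val.1) : a ≠ b :=
  fun e => h (by rw [e])

/-- A child of `v`. -/
def child (b : Bool) (v : GPVertex) : GPVertex :=
  ⟨(v.val.1 + 1, fun i => if i = v.val.1 then b else v.val.2 i), by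
    refine ⟨fun i hi => ?_, ?_⟩
    · dsimp only at hi ⊢
      rw [if_neg (by omega)]
      exact v.prop.1 i (by omega)
    · obtain ⟨N, hN⟩ := v.prop.2
      refine ⟨min N (v.val.1 - 1), fun i hi => ?_⟩
      dsimp only at hi ⊢
      rw [if_neg (by omega)]
      exact hN i (by omega)⟩

lemma child_fst (b : Bool) (v : GPVertex) : (child b v).val.1 = v.val.1 + 1 := rfl

lemma pred_child (b : Bool) (v : GPVertex) : GPpred (child b v) = v := by
  apply vext
  · show v.val.1 + 1 - 1 = v.val.1
    omega
  · intro i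
    show (if i = v.val.1 + 1 - 1 then false else (if i = v.val.1 then b else v.val.2 i))
        = v.val.2 i
    by_cases h : i = v.val.1
    · rw [if_pos (by omega), h]
      exact (v.prop.1 _ le_rfl).symm
    · rw [if_neg (by omega), if_neg h]

/-- The sibling of `v`: flip the bit at `v.val.1 - 1`. -/
def gflip (v : GPVertex) : GPVertex :=
  ⟨(v.val.1, fun i => if i = v.val.1 - 1 then !v.val.2 i else v.val.2 i), by
    refine ⟨fun i hi => ?_, ?_⟩
    · dsimp only at hi ⊢
      rw [if_neg (by omega)]
      exact v.prop.1 i hi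
    · obtain ⟨N, hN⟩ := v.prop.2
      refine ⟨min N (v.val.1 - 2), fun i hi => ?_⟩
      dsimp only at hi ⊢
      rw [if_neg (by omega)]
      exact hN i (by omega)⟩

lemma gflip_fst (v : GPVertex) : (gflip v).val.1 = v.val.1 := rfl

lemma gflip_snd (v : GPVertex) (i : ℤ) :
    (gflip v).val.2 i = if i = v.val.1 - 1 then !v.val.2 i else v.val.2 i := rfl

lemma gflip_ne (v : GPVertex) : gflip v ≠ v := fun h => by
  have := congrArg (fun z : GPVertex => z.val.2 (v.val.1 - 1)) h
  simp only [gflip_snd, if_pos rfl] at this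
  simp at this

lemma pred_gflip (v : GPVertex) : GPpred (gflip v) = GPpred v := by
  apply vext
  · rfl
  · intro i
    show (if i = v.val.1 - 1 then false else (gflip v).val.2 i)
        = if i = v.val.1 - 1 then false else v.val.2 i
    by_cases h : i = v.val.1 - 1
    · rw [if_pos h, if_pos h]
    · rw [if_neg h, if_neg h, gflip_snd, if_neg h]

lemma pred_eq_pred {x v : GPVertex} (hx : GPpred x = GPpred v) : x = v ∨ x = gflip v := by
  have hf : x.val.1 = v.val.1 := by
    have := congrArg (fun z : GPVertex => z.val.1) hx
    simp only [pred_fst] at this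
    omega
  have hs : ∀ i, i ≠ v.val.1 - 1 → x.val.2 i = v.val.2 i := by
    intro i hi
    have := congrArg (fun z : GPVertex => z.val.2 i) hx
    simp only [pred_snd] at this
    rwa [if_neg (by omega), if_neg hi] at this
  by_cases hb : x.val.2 (v.val.1 - 1) = v.val.2 (v.val.1 - 1)
  · left
    refine vext hf (fun i => ?_)
    by_cases h : i = v.val.1 - 1
    · rw [h]; exact hb
    · exact hs i h
  · right
    refine vext hf (fun i => ?_)
    rw [gflip_snd]
    by_cases h : i = v.val.1 - 1
    · rw [if_pos h, h]
      revert hb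
      cases v.val.2 (v.val.1 - 1) <;> cases hxx : x.val.2 (v.val.1 - 1) <;> simp_all
    · rw [if_neg h]; exact hs i h

/-- Adjacency helpers. -/
lemma adj_pred (v : GPVertex) : GP.Adj v (GPpred v) :=
  ⟨ne_of_fst (by rw [pred_fst]; omega), Or.inr (Or.inl rfl)⟩

lemma adj_pred2 (v : GPVertex) : GP.Adj v (GPpred (GPpred v)) :=
  ⟨ne_of_fst (by rw [pred_fst, pred_fst]; omega), Or.inr (Or.inr (Or.inr rfl))⟩

lemma adj_child (b : Bool) (v : GPVertex) : GP.Adj v (child b v) :=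
  ⟨ne_of_fst (by rw [child_fst]; omega), Or.inl (pred_child b v).symm⟩

lemma height_of_adj {v x : GPVertex} (h : GP.Adj v x) :
    (v = GPpred x ∧ v.val.1 = x.val.1 - 1) ∨ (x = GPpred v ∧ x.val.1 = v.val.1 - 1) ∨
    (v = GPpred (GPpred x) ∧ v.val.1 = x.val.1 - 2) ∨
    (x = GPpred (GPpred v) ∧ x.val.1 = v.val.1 - 2) := by
  obtain ⟨-, hrel⟩ := h
  rcases hrel with h | h | h | h
  · exact Or.inl ⟨h, by rw [h, pred_fst]⟩
  · exact Or.inr (Or.inl ⟨h, by rw [h, pred_fst]⟩)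
  · exact Or.inr (Or.inr (Or.inl ⟨h, by rw [h, pred_fst, pred_fst]; omega⟩))
  · exact Or.inr (Or.inr (Or.inr ⟨h, by rw [h, pred_fst, pred_fst]; omega⟩))

lemma adj_fst_ne {v x : GPVertex} (h : GP.Adj v x) : v.val.1 ≠ x.val.1 := by
  rcases height_of_adj h with ⟨-, e⟩ | ⟨-, e⟩ | ⟨-, e⟩ | ⟨-, e⟩ <;> omega


/-- Common neighbors of `v` and its grandparent all equal `GPpred v`. -/
lemma common_of_gp {v w x : GPVertex} (hw : w = GPpred (GPpred v))
    (h1 : GP.Adj v x) (h2 : GP.Adj w x) : x = GPpred v := by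
  have hwf : w.val.1 = v.val.1 - 2 := by
    rw [hw, pred_fst, pred_fst]; omega
  rcases height_of_adj h1 with ⟨e1, f1⟩ | ⟨e1, f1⟩ | ⟨e1, f1⟩ | ⟨e1, f1⟩ <;>
    rcases height_of_adj h2 with ⟨e2, f2⟩ | ⟨e2, f2⟩ | ⟨e2, f2⟩ | ⟨e2, f2⟩ <;>
    first | omega | assumption

/-- Common neighbors of `v` and its grandchild `w` all equal `GPpred w`. -/
lemma common_of_gc {v w x : GPVertex} (hw : v = GPpred (GPpred w))
    (h1 : GP.Adj v x) (h2 : GP.Adj w x) : x = GPpred w := by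
  have hwf : v.val.1 = w.val.1 - 2 := by
    rw [hw, pred_fst, pred_fst]; omega
  rcases height_of_adj h1 with ⟨e1, f1⟩ | ⟨e1, f1⟩ | ⟨e1, f1⟩ | ⟨e1, f1⟩ <;>
    rcases height_of_adj h2 with ⟨e2, f2⟩ | ⟨e2, f2⟩ | ⟨e2, f2⟩ | ⟨e2, f2⟩ <;>
    first | omega | assumption

/-- `v` and `w` have at least two common neighbors. -/
def C2 (v w : GPVertex) : Prop :=
  ∃ x y, x ≠ y ∧ GP.Adj v x ∧ GP.Adj w x ∧ GP.Adj v y ∧ GP.Adj w y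

/-- Graph-theoretic characterization of `GPpred v`. -/
def Phi (v w : GPVertex) : Prop :=
  GP.Adj v w ∧ C2 v w ∧ ∀ x, GP.Adj v x → C2 v x → x ≠ w → GP.Adj w x

lemma phi_pred (v : GPVertex) : Phi v (GPpred v) := by
  refine ⟨adj_pred v, ?_, ?_⟩
  · refine ⟨GPpred (GPpred v), child true v,
      ne_of_fst (by rw [pred_fst, pred_fst, child_fst]; omega),
      adj_pred2 v, adj_pred (GPpred v), adj_child true v, ?_⟩
    exact ⟨ne_of_fst (by rw [pred_fst, child_fst]; omega),
      Or.inr (Or.inr (Or.inl (by rw [pred_child])))⟩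
  · intro x hx hC2 hne
    rcases height_of_adj hx with ⟨h, e⟩ | ⟨h, e⟩ | ⟨h, e⟩ | ⟨h, e⟩
    · -- v = GPpred x : x is a child of v, adjacent to GPpred v (its grandparent)
      exact ⟨ne_of_fst (by rw [pred_fst]; omega),
        Or.inr (Or.inr (Or.inl (by rw [← h])))⟩
    · exact absurd h hne
    · -- v = GPpred (GPpred x) : x grandchild, contradiction with C2
      obtain ⟨a, b, hab, h1, h2, h3, h4⟩ := hC2
      exact absurd ((common_of_gc h h1 h2).trans (common_of_gc h h3 h4).symm) hab
    · -- x = GPpred (GPpred v) : grandparent, contradiction with C2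
      obtain ⟨a, b, hab, h1, h2, h3, h4⟩ := hC2
      exact absurd ((common_of_gp h h1 h2).trans (common_of_gp h h3 h4).symm) hab

lemma phi_unique {v w : GPVertex} (hp : Phi v w) : w = GPpred v := by
  obtain ⟨hadj, hC2, hall⟩ := hp
  rcases height_of_adj hadj with ⟨h, e⟩ | ⟨h, e⟩ | ⟨h, e⟩ | ⟨h, e⟩
  · -- v = GPpred w : w is a child of v; use the sibling gflip w
    exfalso
    have hpw' : GPpred (gflip w) = v := by rw [pred_gflip, ← h]
    have hadj' : GP.Adj v (gflip w) :=
      ⟨ne_of_fst (by rw [gflip_fst]; omega), Or.inl hpw'.symm⟩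
    have hC2' : C2 v (gflip w) := by
      refine ⟨GPpred v, child true (gflip w),
        ne_of_fst (by rw [pred_fst, child_fst, gflip_fst]; omega),
        adj_pred v, ?_, ?_, adj_child true (gflip w)⟩
      · exact ⟨ne_of_fst (by rw [gflip_fst, pred_fst]; omega),
          Or.inr (Or.inr (Or.inr (by rw [pred_gflip, ← h])))⟩
      · refine ⟨ne_of_fst (by rw [child_fst, gflip_fst]; omega),
          Or.inr (Or.inr (Or.inl ?_))⟩
        rw [pred_child, pred_gflip]
        exact h
    have hAdj := hall (gflip w) hadj' hC2' (gflip_ne w)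
    have := adj_fst_ne hAdj
    rw [gflip_fst] at this
    exact this rfl
  · exact h
  · -- v = GPpred (GPpred w) : grandchild, contradiction with C2 v w
    exfalso
    obtain ⟨a, b, hab, h1, h2, h3, h4⟩ := hC2
    exact hab ((common_of_gc h h1 h2).trans (common_of_gc h h3 h4).symm)
  · exfalso
    obtain ⟨a, b, hab, h1, h2, h3, h4⟩ := hC2
    exact hab ((common_of_gp h h1 h2).trans (common_of_gp h h3 h4).symm)

lemma phi_map (γ : GP ≃g GP) {v w : GPVertex} (hp : Phi v w) : Phi (γ v) (γ w) := by
  obtain ⟨h1, ⟨x, y, hxy, ha, hb, hc, hd⟩, h3⟩ := hp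
  refine ⟨γ.map_adj_iff.2 h1,
    ⟨γ x, γ y, fun e => hxy (γ.injective e), γ.map_adj_iff.2 ha, γ.map_adj_iff.2 hb,
      γ.map_adj_iff.2 hc, γ.map_adj_iff.2 hd⟩, ?_⟩
  intro z hz hc2 hne
  have hz' : GP.Adj v (γ.symm z) := by
    rw [← γ.map_adj_iff, γ.apply_symm_apply]
    exact hz
  have hc2' : C2 v (γ.symm z) := by
    obtain ⟨a, b, hab, p1, p2, p3, p4⟩ := hc2
    refine ⟨γ.symm a, γ.symm b, fun e => hab (γ.symm.injective e), ?_, ?_, ?_, ?_⟩ <;>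
      · rw [← γ.map_adj_iff]
        simp only [γ.apply_symm_apply]
        assumption
  have hnw : γ.symm z ≠ w := fun e => hne (by rw [← e, γ.apply_symm_apply])
  have := h3 _ hz' hc2' hnw
  have : GP.Adj (γ w) (γ (γ.symm z)) := γ.map_adj_iff.2 this
  rwa [γ.apply_symm_apply] at this


/-- A permutation commuting with `GPpred` is an automorphism of `GP`. -/
def isoOfPredComm (e : Equiv.Perm GPVertex) (hc : ∀ x, GPpred (e x) = e (GPpred x)) :
    GP ≃g GP where
  toEquiv := e
  map_rel_iff' := by
    intro a b
    have hc2 : ∀ x, GPpred (GPpred (e x)) = e (GPpred (GPpred x)) := fun x => by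
      rw [hc, hc]
    constructor
    · rintro ⟨hne, hrel⟩
      refine ⟨fun h => hne (congrArg e h), ?_⟩
      rcases hrel with h | h | h | h
      · exact Or.inl (e.injective (h.trans (hc b)))
      · exact Or.inr (Or.inl (e.injective (h.trans (hc a))))
      · exact Or.inr (Or.inr (Or.inl (e.injective (h.trans (hc2 b)))))
      · exact Or.inr (Or.inr (Or.inr (e.injective (h.trans (hc2 a)))))
    · rintro ⟨hne, hrel⟩
      refine ⟨fun h => hne (e.injective h), ?_⟩
      rcases hrel with h | h | h | h
      · exact Or.inl (by rw [h, hc])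
      · exact Or.inr (Or.inl (by rw [h, hc]))
      · exact Or.inr (Or.inr (Or.inl (by rw [h, hc2])))
      · exact Or.inr (Or.inr (Or.inr (by rw [h, hc2])))

/-- Flip the bit at position `j` on all vertices of height `> j`. -/
def flipAtFun (j : ℤ) (x : GPVertex) : GPVertex :=
  if h : j < x.val.1 then
    ⟨(x.val.1, fun i => if i = j then !x.val.2 i else x.val.2 i), by
      refine ⟨fun i hi => ?_, ?_⟩
      · dsimp only at hi ⊢
        rw [if_neg (by omega)]
        exact x.prop.1 i hi
      · obtain ⟨N, hN⟩ := x.prop.2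
        refine ⟨min N (j - 1), fun i hi => ?_⟩
        dsimp only at hi ⊢
        rw [if_neg (by omega)]
        exact hN i (by omega)⟩
  else x

lemma flipAt_fst (j : ℤ) (x : GPVertex) : (flipAtFun j x).val.1 = x.val.1 := by
  unfold flipAtFun
  by_cases h : j < x.val.1
  · exact (congrArg (fun z : GPVertex => z.val.1) (dif_pos h)).trans rfl
  · exact congrArg (fun z : GPVertex => z.val.1) (dif_neg h)

lemma flipAt_snd {j : ℤ} {x : GPVertex} (h : j < x.val.1) (i : ℤ) :
    (flipAtFun j x).val.2 i = if i = j then !x.val.2 i else x.val.2 i := by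
  unfold flipAtFun
  exact congrArg (fun z : GPVertex => z.val.2 i) (dif_pos h)

lemma flipAt_of_le {j : ℤ} {x : GPVertex} (h : ¬ j < x.val.1) : flipAtFun j x = x := by
  unfold flipAtFun
  exact dif_neg h

lemma flipAt_invol (j : ℤ) : Function.Involutive (flipAtFun j) := by
  intro x
  by_cases h : j < x.val.1
  · have h' : j < (flipAtFun j x).val.1 := by rw [flipAt_fst]; exact h
    apply vext
    · rw [flipAt_fst, flipAt_fst]
    · intro i
      rw [flipAt_snd h', flipAt_snd h]
      by_cases hi : i = j
      · simp only [if_pos hi, Bool.not_not]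
      · simp only [if_neg hi]
  · rw [flipAt_of_le h, flipAt_of_le h]

lemma flipAt_pred (j : ℤ) (x : GPVertex) :
    GPpred (flipAtFun j x) = flipAtFun j (GPpred x) := by
  by_cases h1 : j < x.val.1 - 1
  · have hx : j < x.val.1 := by omega
    have hp : j < (GPpred x).val.1 := by rw [pred_fst]; omega
    apply vext
    · rw [pred_fst, flipAt_fst, flipAt_fst, pred_fst]
    · intro i
      rw [pred_snd, flipAt_fst, flipAt_snd hx, flipAt_snd hp, pred_snd]
      by_cases hi : i = x.val.1 - 1
      · rw [if_pos hi, if_neg (by omega), if_pos hi]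
      · rw [if_neg hi]
        by_cases hj : i = j
        · rw [if_pos hj, if_pos hj, if_neg hi]
        · rw [if_neg hj, if_neg hj, if_neg hi]
  · by_cases h2 : j < x.val.1
    · -- x.val.1 = j + 1
      rw [flipAt_of_le (x := GPpred x) (by rw [pred_fst]; omega)]
      apply vext
      · rw [pred_fst, flipAt_fst, pred_fst]
      · intro i
        rw [pred_snd, flipAt_fst, pred_snd]
        by_cases hi : i = x.val.1 - 1
        · rw [if_pos hi, if_pos hi]
        · rw [if_neg hi, if_neg hi, flipAt_snd h2, if_neg (by omega)]
    · rw [flipAt_of_le h2, flipAt_of_le (x := GPpred x) (by rw [pred_fst]; omega)]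

/-- The sibling-swap automorphism at `v`. -/
def flipIso (v : GPVertex) : GP ≃g GP :=
  isoOfPredComm ((flipAt_invol (v.val.1 - 1)).toPerm) (fun x => flipAt_pred _ x)

lemma flipIso_apply (v x : GPVertex) : flipIso v x = flipAtFun (v.val.1 - 1) x := rfl

lemma flipIso_pred (v : GPVertex) : flipIso v (GPpred v) = GPpred v := by
  rw [flipIso_apply, flipAt_of_le (by rw [pred_fst]; omega)]

lemma flipIso_self (v : GPVertex) : flipIso v v = gflip v := by
  rw [flipIso_apply]
  have h : v.val.1 - 1 < v.val.1 := by omega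
  apply vext
  · rw [flipAt_fst, gflip_fst]
  · intro i
    rw [flipAt_snd h, gflip_snd]

/-- The shift automorphism. -/
def shiftFun (x : GPVertex) : GPVertex :=
  ⟨(x.val.1 - 1, fun i => x.val.2 (i + 1)), by
    refine ⟨fun i hi => ?_, ?_⟩
    · exact x.prop.1 (i + 1) (by dsimp only at hi; omega)
    · obtain ⟨N, hN⟩ := x.prop.2
      exact ⟨N - 1, fun i hi => hN (i + 1) (by omega)⟩⟩

def unshiftFun (x : GPVertex) : GPVertex :=
  ⟨(x.val.1 + 1, fun i => x.val.2 (i - 1)), by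
    refine ⟨fun i hi => ?_, ?_⟩
    · exact x.prop.1 (i - 1) (by dsimp only at hi; omega)
    · obtain ⟨N, hN⟩ := x.prop.2
      exact ⟨N + 1, fun i hi => hN (i - 1) (by omega)⟩⟩

def shiftEquiv : Equiv.Perm GPVertex where
  toFun := shiftFun
  invFun := unshiftFun
  left_inv := fun x => vext (by show x.val.1 - 1 + 1 = x.val.1; omega)
    (fun i => congrArg x.val.2 (by omega))
  right_inv := fun x => vext (by show x.val.1 + 1 - 1 = x.val.1; omega)
    (fun i => congrArg x.val.2 (by omega))

lemma shift_pred (x : GPVertex) : GPpred (shiftEquiv x) = shiftEquiv (GPpred x) := by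
  apply vext
  · rfl
  · intro i
    show (if i = x.val.1 - 1 - 1 then false else x.val.2 (i + 1))
        = if i + 1 = x.val.1 - 1 then false else x.val.2 (i + 1)
    by_cases hi : i = x.val.1 - 1 - 1
    · rw [if_pos hi, if_pos (by omega)]
    · rw [if_neg hi, if_neg (by omega)]

def shiftIso : GP ≃g GP := isoOfPredComm shiftEquiv shift_pred

def v0 : GPVertex := ⟨(0, fun _ => false), fun _ _ => rfl, 0, fun _ _ => rfl⟩

lemma shift_v0 : shiftIso v0 = GPpred v0 := by
  apply vext
  · rfl
  · intro i
    show (false : Bool) = if i = (0 : ℤ) - 1 then false else false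
    split <;> rfl

/-- Part 1a. -/
lemma fix_pred (v : GPVertex) (γ : GP ≃g GP) (hγ : γ v = v) :
    γ (GPpred v) = GPpred v := by
  have h1 := phi_map γ (phi_pred v)
  rw [hγ] at h1
  exact phi_unique h1

/-- Part 1b. -/
lemma orbit1 (v : GPVertex) :
    Nat.card {w : GPVertex | ∃ γ : GP ≃g GP, γ v = v ∧ γ (GPpred v) = w} = 1 := by
  have hs : {w : GPVertex | ∃ γ : GP ≃g GP, γ v = v ∧ γ (GPpred v) = w} = {GPpred v} := by
    ext w
    simp only [Set.mem_setOf_eq, Set.mem_singleton_iff]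
    constructor
    · rintro ⟨γ, h1, rfl⟩
      exact fix_pred v γ h1
    · rintro rfl
      exact ⟨(SimpleGraph.Iso.refl : GP ≃g GP), rfl, rfl⟩
  rw [hs]
  simp

/-- Part 1c. -/
lemma orbit2 (v : GPVertex) :
    Nat.card {w : GPVertex | ∃ γ : GP ≃g GP, γ (GPpred v) = GPpred v ∧ γ v = w} = 2 := by
  have hs : {w : GPVertex | ∃ γ : GP ≃g GP, γ (GPpred v) = GPpred v ∧ γ v = w}
      = {v, gflip v} := by
    ext w
    simp only [Set.mem_setOf_eq, Set.mem_insert_iff, Set.mem_singleton_iff]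
    constructor
    · rintro ⟨γ, h1, rfl⟩
      have h2 := phi_map γ (phi_pred v)
      rw [h1] at h2
      exact pred_eq_pred (phi_unique h2).symm
    · rintro (rfl | rfl)
      · exact ⟨(SimpleGraph.Iso.refl : GP ≃g GP), rfl, rfl⟩
      · exact ⟨flipIso v, flipIso_pred v, flipIso_self v⟩
  rw [hs, Nat.card_coe_set_eq, Set.ncard_pair (Ne.symm (gflip_ne v))]

end GPAux


/-- Every automorphism of `GP` fixing `v` fixes `p(v)`, so
`|Aut(GP)_v p(v)| = 1`, while `|Aut(GP)_{p(v)} v| = 2`; in particular the action of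
`Aut(GP)` on `GP` is not unimodular. -/
theorem statement_13 :
    (∀ v : GPVertex,
      (∀ γ : GP ≃g GP, γ v = v → γ (GPpred v) = GPpred v) ∧
      Nat.card {w : GPVertex | ∃ γ : GP ≃g GP, γ v = v ∧ γ (GPpred v) = w} = 1 ∧
      Nat.card {w : GPVertex | ∃ γ : GP ≃g GP, γ (GPpred v) = GPpred v ∧ γ v = w} = 2) ∧
    ¬ (∀ u v : GPVertex, (∃ γ : GP ≃g GP, γ u = v) →
        Nat.card {w : GPVertex | ∃ γ : GP ≃g GP, γ u = u ∧ γ v = w} =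
          Nat.card {w : GPVertex | ∃ γ : GP ≃g GP, γ v = v ∧ γ u = w}) := by
  constructor
  · exact fun v => ⟨GPAux.fix_pred v, GPAux.orbit1 v, GPAux.orbit2 v⟩
  · intro huni
    have h := huni GPAux.v0 (GPpred GPAux.v0) ⟨GPAux.shiftIso, GPAux.shift_v0⟩
    rw [GPAux.orbit1 GPAux.v0, GPAux.orbit2 GPAux.v0] at h
    omega
end
end

section
/- The Grandparent graph GP admits no unimodular graph height function: for every graph height function (h',Γ) on GP there exist vertices u, v with v in the Γ-orbit of u and |Γ_u v| ≠ |Γ_v u|. -/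
open Filter Finset

noncomputable section

variable {V : Type*}

namespace GPaux

lemma lvl_pred (v : GPVertex) : (GPpred v).val.1 = v.val.1 - 1 := rfl

lemma fn_pred (v : GPVertex) (i : ℤ) :
    (GPpred v).val.2 i = if i = v.val.1 - 1 then false else v.val.2 i := rfl

/-- The child of `v` with bit `b`. -/
def child (v : GPVertex) (b : Bool) : GPVertex :=
  ⟨(v.val.1 + 1, fun i => if i = v.val.1 then b else v.val.2 i), by
    constructor
    · intro i hi
      dsimp only at hi ⊢
      split
      · omega
      · exact v.prop.1 i (by omega)
    · obtain ⟨N, hN⟩ := v.prop.2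
      refine ⟨min N (v.val.1 - 1), fun i hi => ?_⟩
      have h1 : i ≤ N := le_trans hi (min_le_left _ _)
      have h2 : i ≤ v.val.1 - 1 := le_trans hi (min_le_right _ _)
      dsimp only
      rw [if_neg (by omega)]
      exact hN i h1⟩

lemma lvl_child (v : GPVertex) (b : Bool) : (child v b).val.1 = v.val.1 + 1 := rfl

lemma fn_child (v : GPVertex) (b : Bool) (i : ℤ) :
    (child v b).val.2 i = if i = v.val.1 then b else v.val.2 i := rfl

lemma child_snd (v : GPVertex) (b : Bool) : (child v b).val.2 v.val.1 = b := by
  rw [fn_child, if_pos rfl]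

lemma pred_child (v : GPVertex) (b : Bool) : GPpred (child v b) = v := by
  apply Subtype.ext
  apply Prod.ext
  · show v.val.1 + 1 - 1 = v.val.1
    omega
  · funext i
    show (if i = (child v b).val.1 - 1 then false else (child v b).val.2 i) = v.val.2 i
    rw [lvl_child, fn_child]
    have he : v.val.1 + 1 - 1 = v.val.1 := by omega
    rw [he]
    by_cases h : i = v.val.1
    · rw [if_pos h, h]
      exact (v.prop.1 _ le_rfl).symm
    · rw [if_neg h, if_neg h]

lemma eq_child_of_pred_eq {u v : GPVertex} (h : GPpred u = v) :
    u = child v (u.val.2 v.val.1) := by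
  have hl : v.val.1 = u.val.1 - 1 := by rw [← h]; rfl
  have hf : ∀ i, v.val.2 i = if i = u.val.1 - 1 then false else u.val.2 i := by
    intro i; rw [← h]; rfl
  apply Subtype.ext
  apply Prod.ext
  · show u.val.1 = v.val.1 + 1
    omega
  · funext i
    show u.val.2 i = if i = v.val.1 then u.val.2 v.val.1 else v.val.2 i
    by_cases h1 : i = v.val.1
    · rw [if_pos h1, h1]
    · rw [if_neg h1, hf i, if_neg (by omega)]

lemma child_bit_inj {v : GPVertex} {b1 b2 : Bool} (h : child v b1 = child v b2) : b1 = b2 := by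
  have := congrArg (fun u : GPVertex => u.val.2 v.val.1) h
  simpa [child_snd] using this

lemma child_ne (v : GPVertex) : child v false ≠ child v true := by
  intro h; exact Bool.false_ne_true (child_bit_inj h)

/-- Level relations of adjacent vertices. -/
lemma adj_lvl {u v : GPVertex} (h : GP.Adj u v) :
    u.val.1 = v.val.1 - 1 ∨ u.val.1 = v.val.1 + 1 ∨ u.val.1 = v.val.1 - 2 ∨ u.val.1 = v.val.1 + 2 := by
  rcases h.2 with h | h | h | h <;>
    [ (left; rw [h]; rfl);
      (right; left; have := congrArg (fun z : GPVertex => z.val.1) h;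
        rw [lvl_pred] at this; omega);
      (right; right; left; rw [h, lvl_pred, lvl_pred]; omega);
      (right; right; right; have := congrArg (fun z : GPVertex => z.val.1) h;
        rw [lvl_pred, lvl_pred] at this; omega)]

lemma pred_ne (v : GPVertex) : GPpred v ≠ v := by
  intro h
  have := congrArg (fun z : GPVertex => z.val.1) h
  simp only [lvl_pred] at this
  omega

lemma pred2_ne (v : GPVertex) : GPpred (GPpred v) ≠ v := by
  intro h
  have := congrArg (fun z : GPVertex => z.val.1) h
  simp only [lvl_pred] at this
  omega

lemma adj_pred (v : GPVertex) : GP.Adj (GPpred v) v :=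
  ⟨pred_ne v, Or.inl rfl⟩

lemma adj_pred2 (v : GPVertex) : GP.Adj (GPpred (GPpred v)) v :=
  ⟨pred2_ne v, Or.inr (Or.inr (Or.inl rfl))⟩

lemma adj_child (v : GPVertex) (b : Bool) : GP.Adj v (child v b) := by
  refine ⟨?_, Or.inl (pred_child v b).symm⟩
  intro h
  have := congrArg (fun z : GPVertex => z.val.1) h
  simp only [lvl_child] at this
  omega

lemma adj_pred_child (v : GPVertex) (b : Bool) : GP.Adj (GPpred v) (child v b) := by
  refine ⟨?_, Or.inr (Or.inr (Or.inl ?_))⟩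
  · intro h
    have := congrArg (fun z : GPVertex => z.val.1) h
    simp only [lvl_pred, lvl_child] at this
    omega
  · rw [pred_child]

/-- Two distinct common neighbours. -/
def TwoCN (u v : GPVertex) : Prop :=
  ∃ x y : GPVertex, x ≠ y ∧ GP.Adj u x ∧ GP.Adj v x ∧ GP.Adj u y ∧ GP.Adj v y

lemma twoCN_symm {u v : GPVertex} (h : TwoCN u v) : TwoCN v u := by
  obtain ⟨x, y, hxy, h1, h2, h3, h4⟩ := h
  exact ⟨x, y, hxy, h2, h1, h4, h3⟩

lemma twoCN_parent (v : GPVertex) : TwoCN (GPpred v) v :=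
  ⟨child v false, child v true, child_ne v,
    adj_pred_child v false, adj_child v false, adj_pred_child v true, adj_child v true⟩

/-- Any common neighbour of `v` and its grandparent is the parent of `v`. -/
lemma common_nbr_eq {v w : GPVertex} (hu : GP.Adj w (GPpred (GPpred v))) (hv : GP.Adj w v) :
    w = GPpred v := by
  have lu : (GPpred (GPpred v)).val.1 = v.val.1 - 2 := by rw [lvl_pred, lvl_pred]; omega
  rcases hv.2 with h | h | h | h
  · exact h
  · -- v = GPpred w, so w is a child of v : level v + 1
    exfalso
    have lw : w.val.1 = v.val.1 + 1 := by
      have := congrArg (fun z : GPVertex => z.val.1) h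
      simp only [lvl_pred] at this; omega
    rcases adj_lvl hu with h' | h' | h' | h' <;> omega
  · -- w = grandparent of v : but w ≠ grandparent since adjacent
    exact absurd h hu.1
  · -- v = GPpred (GPpred w), so w at level v + 2
    exfalso
    have lw : w.val.1 = v.val.1 + 2 := by
      have := congrArg (fun z : GPVertex => z.val.1) h
      simp only [lvl_pred] at this; omega
    rcases adj_lvl hu with h' | h' | h' | h' <;> omega

lemma not_twoCN_grand (v : GPVertex) : ¬ TwoCN (GPpred (GPpred v)) v := by
  rintro ⟨x, y, hxy, h1, h2, h3, h4⟩
  have hx : x = GPpred v := common_nbr_eq h1.symm h2.symm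
  have hy : y = GPpred v := common_nbr_eq h3.symm h4.symm
  exact hxy (hx.trans hy.symm)

/-- Tree edge. -/
def TreeE (u v : GPVertex) : Prop := GP.Adj u v ∧ TwoCN u v

lemma treeE_iff {u v : GPVertex} : TreeE u v ↔ (GPpred u = v ∨ GPpred v = u) := by
  constructor
  · rintro ⟨hadj, h2⟩
    rcases hadj.2 with h | h | h | h
    · right; exact h.symm
    · left; exact h.symm
    · exfalso; rw [h] at h2; exact not_twoCN_grand v h2
    · exfalso; rw [h] at h2; exact not_twoCN_grand u (twoCN_symm h2)
  · rintro (h | h)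
    · refine ⟨?_, ?_⟩
      · rw [← h]; exact (adj_pred u).symm
      · rw [← h]; exact twoCN_symm (twoCN_parent u)
    · refine ⟨?_, ?_⟩
      · rw [← h]; exact adj_pred v
      · rw [← h]; exact twoCN_parent v

/-- `u` is the parent of `v`, characterised graph-theoretically. -/
def PRel (v u : GPVertex) : Prop :=
  TreeE v u ∧ ∀ w1 w2 : GPVertex,
    (w1 ≠ v ∧ TreeE u w1 ∧ GP.Adj v w1) → (w2 ≠ v ∧ TreeE u w2 ∧ GP.Adj v w2) → w1 = w2

lemma pRel_iff {v u : GPVertex} : PRel v u ↔ u = GPpred v := by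
  constructor
  · rintro ⟨hT, huniq⟩
    rcases treeE_iff.mp hT with h | h
    · -- GPpred v = u
      exact h.symm
    · -- GPpred u = v : u is a child of v; derive a contradiction
      exfalso
      have lu : u.val.1 = v.val.1 + 1 := by
        have := congrArg (fun z : GPVertex => z.val.1) h
        simp only [lvl_pred] at this; omega
      have key : ∀ b : Bool, child u b ≠ v ∧ TreeE u (child u b) ∧ GP.Adj v (child u b) := by
        intro b
        refine ⟨?_, ?_, ?_⟩
        · intro hb
          have := congrArg (fun z : GPVertex => z.val.1) hb
          simp only [lvl_child] at this; omega
        · exact treeE_iff.mpr (Or.inr (pred_child u b))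
        · refine ⟨?_, Or.inr (Or.inr (Or.inl ?_))⟩
          · intro hb
            have := congrArg (fun z : GPVertex => z.val.1) hb
            simp only [lvl_child] at this; omega
          · rw [pred_child, h]
      have := huniq (child u false) (child u true) (key false) (key true)
      exact child_ne u this
  · rintro rfl
    refine ⟨treeE_iff.mpr (Or.inl rfl), ?_⟩
    rintro w1 w2 ⟨h1v, h1T, h1A⟩ ⟨h2v, h2T, h2A⟩
    have key : ∀ w : GPVertex, w ≠ v → TreeE (GPpred v) w → GP.Adj v w →
        w = GPpred (GPpred v) := by
      intro w hwv hwT hwA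
      rcases treeE_iff.mp hwT with h | h
      · exact h.symm
      · -- GPpred w = GPpred v : w is a sibling of v at the same level, contradiction
        exfalso
        have lw : w.val.1 = v.val.1 := by
          have := congrArg (fun z : GPVertex => z.val.1) h
          simp only [lvl_pred] at this; omega
        rcases adj_lvl hwA with h' | h' | h' | h' <;> omega
    rw [key w1 h1v h1T h1A, key w2 h2v h2T h2A]

lemma iso_twoCN (γ : GP ≃g GP) {u v : GPVertex} (h : TwoCN u v) : TwoCN (γ u) (γ v) := by
  obtain ⟨x, y, hxy, h1, h2, h3, h4⟩ := h
  exact ⟨γ x, γ y, fun hc => hxy (γ.injective hc),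
    γ.map_adj_iff.mpr h1, γ.map_adj_iff.mpr h2, γ.map_adj_iff.mpr h3, γ.map_adj_iff.mpr h4⟩

lemma iso_treeE (γ : GP ≃g GP) {u v : GPVertex} (h : TreeE u v) : TreeE (γ u) (γ v) :=
  ⟨γ.map_adj_iff.mpr h.1, iso_twoCN γ h.2⟩

lemma iso_pRel (γ : GP ≃g GP) {v u : GPVertex} (h : PRel v u) : PRel (γ v) (γ u) := by
  obtain ⟨hT, huniq⟩ := h
  refine ⟨iso_treeE γ hT, ?_⟩
  rintro w1 w2 ⟨h1v, h1T, h1A⟩ ⟨h2v, h2T, h2A⟩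
  have e1 : γ (γ.symm w1) = w1 := γ.apply_symm_apply w1
  have e2 : γ (γ.symm w2) = w2 := γ.apply_symm_apply w2
  have key : ∀ w : GPVertex, w ≠ γ v → TreeE (γ u) w → GP.Adj (γ v) w →
      (γ.symm w ≠ v ∧ TreeE u (γ.symm w) ∧ GP.Adj v (γ.symm w)) := by
    intro w hwv hwT hwA
    refine ⟨?_, ?_, ?_⟩
    · intro hc; apply hwv; rw [← hc, γ.apply_symm_apply]
    · have := iso_treeE γ.symm hwT
      rwa [γ.symm_apply_apply] at this
    · have : GP.Adj (γ.symm (γ v)) (γ.symm w) := γ.symm.map_adj_iff.mpr hwA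
      rwa [γ.symm_apply_apply] at this
  have := huniq _ _ (key w1 h1v h1T h1A) (key w2 h2v h2T h2A)
  rw [← e1, ← e2, this]

/-- Every automorphism of `GP` commutes with the predecessor map. -/
lemma iso_pred_comm (γ : GP ≃g GP) (v : GPVertex) : γ (GPpred v) = GPpred (γ v) := by
  have h1 : PRel v (GPpred v) := pRel_iff.mpr rfl
  exact pRel_iff.mp (iso_pRel γ h1)

lemma iso_pred_iter_comm (γ : GP ≃g GP) (k : ℕ) (v : GPVertex) :
    γ (GPpred^[k] v) = GPpred^[k] (γ v) := by
  induction k with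
  | zero => rfl
  | succ n ih =>
    rw [Function.iterate_succ_apply', Function.iterate_succ_apply', iso_pred_comm, ih]

end GPaux

namespace GPaux

/-- The `j`-th bit of the descent path of `z` (whether `z`'s ancestor at depth `j`
is the `true` or `false` child of the ancestor at depth `j+1`). -/
def bit (z : GPVertex) (j : ℕ) : Bool :=
  (GPpred^[j] z).val.2 ((GPpred^[j + 1] z).val.1)

lemma bits_inj : ∀ (n : ℕ) (z1 z2 : GPVertex), GPpred^[n] z1 = GPpred^[n] z2 →
    (∀ j < n, bit z1 j = bit z2 j) → z1 = z2 := by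
  intro n
  induction n with
  | zero => intro z1 z2 h _; exact h
  | succ n ih =>
    intro z1 z2 h hb
    apply ih z1 z2 ?_ (fun j hj => hb j (by omega))
    have c1 : GPpred^[n] z1 = child (GPpred^[n + 1] z1) (bit z1 n) :=
      eq_child_of_pred_eq (Function.iterate_succ_apply' GPpred n z1).symm
    have c2 : GPpred^[n] z2 = child (GPpred^[n + 1] z2) (bit z2 n) :=
      eq_child_of_pred_eq (Function.iterate_succ_apply' GPpred n z2).symm
    rw [c1, c2, h, hb n (by omega)]

/-- Descend from `z` along a list of bits. -/
def desc (z : GPVertex) : List Bool → GPVertex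
  | [] => z
  | b :: l => child (desc z l) b

lemma pred_iter_desc (z : GPVertex) : ∀ l : List Bool, GPpred^[l.length] (desc z l) = z
  | [] => rfl
  | b :: l => by
    rw [List.length_cons, Function.iterate_succ_apply,
      show desc z (b :: l) = child (desc z l) b from rfl, pred_child]
    exact pred_iter_desc z l

lemma desc_inj (z : GPVertex) : ∀ l1 l2 : List Bool, l1.length = l2.length →
    desc z l1 = desc z l2 → l1 = l2
  | [], [], _, _ => rfl
  | [], b :: l, h, _ => by simp at h
  | b :: l, [], h, _ => by simp at h
  | b1 :: l1, b2 :: l2, h, he => by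
    have hl : desc z l1 = desc z l2 := by
      have := congrArg GPpred he
      rwa [show desc z (b1 :: l1) = child (desc z l1) b1 from rfl,
        show desc z (b2 :: l2) = child (desc z l2) b2 from rfl, pred_child, pred_child] at this
    have hbit : b1 = b2 := by
      rw [show desc z (b1 :: l1) = child (desc z l1) b1 from rfl,
        show desc z (b2 :: l2) = child (desc z l2) b2 from rfl, hl] at he
      exact child_bit_inj he
    rw [hbit, desc_inj z l1 l2 (by simpa using h) hl]

/-- A base vertex. -/
def v0 : GPVertex := ⟨(0, fun _ => false), fun _ _ => rfl, 0, fun _ _ => rfl⟩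

end GPaux

theorem GPaux.no_unimodular (Γ : Subgroup (GP ≃g GP))
    (hqt : ∃ S : Finset GPVertex, ∀ v : GPVertex, ∃ γ ∈ Γ, ∃ s ∈ S, γ s = v) :
    ∃ u v : GPVertex, (∃ γ ∈ Γ, γ u = v) ∧
      Nat.card {w : GPVertex | ∃ γ ∈ Γ, γ u = u ∧ γ v = w} ≠
        Nat.card {w : GPVertex | ∃ γ ∈ Γ, γ v = v ∧ γ u = w} := by
  classical
  by_contra hcon
  push_neg at hcon
  obtain ⟨S, hS⟩ := hqt
  set r := S.card with hr
  -- Key unimodularity consequence: injectivity of `GPpred^[d]` along a periodic orbit.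
  have claim2 : ∀ (d : ℕ) (w1 w2 : GPVertex), (∃ δ ∈ Γ, δ w1 = w2) →
      (∃ γ ∈ Γ, γ w1 = GPpred^[d] w1) → GPpred^[d] w1 = GPpred^[d] w2 → w1 = w2 := by
    rintro d w1 w2 ⟨δ, hδΓ, hδ⟩ hper heq
    have hcards := hcon w1 (GPpred^[d] w1) hper
    have hA : {w : GPVertex | ∃ γ ∈ Γ, γ w1 = w1 ∧ γ (GPpred^[d] w1) = w} =
        {GPpred^[d] w1} := by
      ext w
      simp only [Set.mem_setOf_eq, Set.mem_singleton_iff]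
      constructor
      · rintro ⟨γ, hγΓ, h1, h2⟩
        rw [← h2, GPaux.iso_pred_iter_comm, h1]
      · rintro rfl
        exact ⟨1, one_mem Γ, rfl, rfl⟩
    rw [hA] at hcards
    have h1 : Nat.card ({GPpred^[d] w1} : Set GPVertex) = 1 := by simp
    rw [h1] at hcards
    have hsub : Subsingleton
        {w : GPVertex | ∃ γ ∈ Γ, γ (GPpred^[d] w1) = GPpred^[d] w1 ∧ γ w1 = w} :=
      (Nat.card_eq_one_iff_unique.mp hcards.symm).1
    have m1 : w1 ∈ {w : GPVertex | ∃ γ ∈ Γ, γ (GPpred^[d] w1) = GPpred^[d] w1 ∧ γ w1 = w} :=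
      ⟨1, one_mem Γ, rfl, rfl⟩
    have m2 : w2 ∈ {w : GPVertex | ∃ γ ∈ Γ, γ (GPpred^[d] w1) = GPpred^[d] w1 ∧ γ w1 = w} := by
      refine ⟨δ, hδΓ, ?_, hδ⟩
      rw [GPaux.iso_pred_iter_comm, hδ, ← heq]
    have := hsub.elim (⟨w1, m1⟩ : {w : GPVertex | _}) ⟨w2, m2⟩
    exact congrArg Subtype.val this
  -- A vertex with period `d` on its orbit also has period `k * d`.
  have memk : ∀ (k d : ℕ) (w : GPVertex), (∃ γ ∈ Γ, γ w = GPpred^[d] w) →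
      ∃ γ ∈ Γ, γ w = GPpred^[k * d] w := by
    intro k
    induction k with
    | zero => intro d w _; exact ⟨1, one_mem Γ, by simp⟩
    | succ n ih =>
      rintro d w hper
      obtain ⟨γk, hγkΓ, hγk⟩ := ih d w hper
      obtain ⟨γ, hγΓ, hγ⟩ := hper
      refine ⟨γ * γk, mul_mem hγΓ hγkΓ, ?_⟩
      rw [Nat.succ_mul, RelIso.mul_apply, hγk, GPaux.iso_pred_iter_comm, hγ,
        ← Function.iterate_add_apply]
  -- Injectivity of `GPpred^[k*d]` along a periodic orbit.
  have injk : ∀ (k d : ℕ) (w1 w2 : GPVertex), (∃ δ ∈ Γ, δ w1 = w2) →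
      (∃ γ ∈ Γ, γ w1 = GPpred^[d] w1) → GPpred^[k * d] w1 = GPpred^[k * d] w2 → w1 = w2 := by
    intro k
    induction k with
    | zero => intro d w1 w2 _ _ h; simpa using h
    | succ n ih =>
      rintro d w1 w2 ⟨δ, hδΓ, hδ⟩ hper heq
      apply claim2 d w1 w2 ⟨δ, hδΓ, hδ⟩ hper
      obtain ⟨γ, hγΓ, hγ⟩ := hper
      apply ih d (GPpred^[d] w1) (GPpred^[d] w2) ⟨δ, hδΓ, ?_⟩ ⟨γ, hγΓ, ?_⟩ ?_
      · rw [GPaux.iso_pred_iter_comm, hδ]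
      · rw [GPaux.iso_pred_iter_comm, hγ]
      · rw [← Function.iterate_add_apply, ← Function.iterate_add_apply]
        rw [Nat.succ_mul] at heq
        exact heq
  -- Pigeonhole along the ancestors: every vertex has a periodic ancestor.
  have hP : ∀ y : GPVertex, ∃ ab : ℕ × ℕ, ab.1 < ab.2 ∧ ab.2 ≤ r ∧
      ∃ γ ∈ Γ, γ (GPpred^[ab.1] y) = GPpred^[ab.2] y := by
    intro y
    choose γf hγΓ sf hsS hEq using fun k : ℕ => hS (GPpred^[k] y)
    have hmap : ∀ k ∈ Finset.range (r + 1), sf k ∈ S := fun k _ => hsS k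
    obtain ⟨a, ha, b, hb, hne, hfeq⟩ :=
      Finset.exists_ne_map_eq_of_card_lt_of_maps_to (by simp [hr]) hmap
    have main : ∀ a b : ℕ, a < b → b ≤ r → sf a = sf b →
        ∃ ab : ℕ × ℕ, ab.1 < ab.2 ∧ ab.2 ≤ r ∧
          ∃ γ ∈ Γ, γ (GPpred^[ab.1] y) = GPpred^[ab.2] y := by
      intro a b hlt hle hfe
      refine ⟨(a, b), hlt, hle, γf b * (γf a)⁻¹, mul_mem (hγΓ b) (inv_mem (hγΓ a)), ?_⟩
      rw [RelIso.mul_apply, ← hEq a, RelIso.inv_apply_self, hfe, hEq b]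
    rcases hne.lt_or_gt with hlt | hlt
    · exact main a b hlt (Nat.lt_succ_iff.mp (Finset.mem_range.mp hb)) hfeq
    · exact main b a hlt (Nat.lt_succ_iff.mp (Finset.mem_range.mp ha)) hfeq.symm
  choose AB hab hble hper using hP
  -- The target finite type and the length of descent paths.
  set C := Fintype.card
    (Fin (r + 1) × Fin (r + 1) × Fin (r + 1) × (Fin r → Bool) × (Fin r → Bool)) with hC
  set t := C + 2 * r + 1 with ht
  -- The injection.
  have hinj : ∃ Ψ : (Fin t → Bool) →
      Fin (r + 1) × Fin (r + 1) × Fin (r + 1) × (Fin r → Bool) × (Fin r → Bool),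
      Function.Injective Ψ := by
    refine ⟨fun β =>
      (⟨(AB (GPaux.desc GPaux.v0 (List.ofFn β))).1, by
          have h1 := hab (GPaux.desc GPaux.v0 (List.ofFn β))
          have h2 := hble (GPaux.desc GPaux.v0 (List.ofFn β))
          omega⟩,
       ⟨(AB (GPaux.desc GPaux.v0 (List.ofFn β))).2, by
          have h2 := hble (GPaux.desc GPaux.v0 (List.ofFn β))
          omega⟩,
       ⟨(t - (AB (GPaux.desc GPaux.v0 (List.ofFn β))).1) %
           ((AB (GPaux.desc GPaux.v0 (List.ofFn β))).2 -
            (AB (GPaux.desc GPaux.v0 (List.ofFn β))).1), by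
          have h1 := hab (GPaux.desc GPaux.v0 (List.ofFn β))
          have h2 := hble (GPaux.desc GPaux.v0 (List.ofFn β))
          have h3 := Nat.mod_lt (t - (AB (GPaux.desc GPaux.v0 (List.ofFn β))).1)
            (show 0 < (AB (GPaux.desc GPaux.v0 (List.ofFn β))).2 -
              (AB (GPaux.desc GPaux.v0 (List.ofFn β))).1 by omega)
          omega⟩,
       fun j => GPaux.bit (GPpred^[t - (t - (AB (GPaux.desc GPaux.v0 (List.ofFn β))).1) %
           ((AB (GPaux.desc GPaux.v0 (List.ofFn β))).2 -
            (AB (GPaux.desc GPaux.v0 (List.ofFn β))).1)]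
           (GPaux.desc GPaux.v0 (List.ofFn β))) j.val,
       fun j => GPaux.bit (GPaux.desc GPaux.v0 (List.ofFn β)) j.val), ?_⟩
    intro β1 β2 hΨ
    set y1 := GPaux.desc GPaux.v0 (List.ofFn β1) with hy1
    set y2 := GPaux.desc GPaux.v0 (List.ofFn β2) with hy2
    simp only [Prod.mk.injEq, Fin.mk.injEq] at hΨ
    obtain ⟨ha, hb, hρeq, hzb, hyb⟩ := hΨ
    have hAB : AB y1 = AB y2 := Prod.ext ha hb
    rw [← hAB] at hzb
    -- names
    set a := (AB y1).1 with hadef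
    set b := (AB y1).2 with hbdef
    set d := b - a with hddef
    set ρ := (t - a) % d with hρdef
    have hab1 := hab y1
    have hble1 := hble y1
    have hd : 0 < d := by omega
    have hρd : ρ < d := Nat.mod_lt _ hd
    have htr : 2 * r + 1 ≤ t := by omega
    -- the two descent paths end at v0
    have ht1 : GPpred^[t] y1 = GPaux.v0 := by
      have := GPaux.pred_iter_desc GPaux.v0 (List.ofFn β1)
      rwa [List.length_ofFn] at this
    have ht2 : GPpred^[t] y2 = GPaux.v0 := by
      have := GPaux.pred_iter_desc GPaux.v0 (List.ofFn β2)
      rwa [List.length_ofFn] at this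
    -- the anchors agree
    have hz1 : GPpred^[ρ] (GPpred^[t - ρ] y1) = GPaux.v0 := by
      rw [← Function.iterate_add_apply, show ρ + (t - ρ) = t by omega]
      exact ht1
    have hz2 : GPpred^[ρ] (GPpred^[t - ρ] y2) = GPaux.v0 := by
      rw [← Function.iterate_add_apply, show ρ + (t - ρ) = t by omega]
      exact ht2
    have hz : GPpred^[t - ρ] y1 = GPpred^[t - ρ] y2 := by
      apply GPaux.bits_inj ρ _ _ (hz1.trans hz2.symm)
      intro j hj
      exact congrFun hzb ⟨j, by omega⟩
    -- periodicity of GPpred^[a] y i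
    have hper1 : ∃ γ ∈ Γ, γ (GPpred^[a] y1) = GPpred^[d] (GPpred^[a] y1) := by
      obtain ⟨γ, hγΓ, hγ⟩ := hper y1
      refine ⟨γ, hγΓ, ?_⟩
      rw [← Function.iterate_add_apply, show d + a = b by omega]
      exact hγ
    have hper2 : ∃ γ ∈ Γ, γ (GPpred^[a] y2) = GPpred^[d] (GPpred^[a] y2) := by
      obtain ⟨γ, hγΓ, hγ⟩ := hper y2
      rw [← hAB] at hγ
      refine ⟨γ, hγΓ, ?_⟩
      rw [← Function.iterate_add_apply, show d + a = b by omega]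
      exact hγ
    -- m = t - ρ - a is a multiple of d
    set q := (t - a) / d with hqdef
    have hqm : d * q + ρ = t - a := Nat.div_add_mod (t - a) d
    have hcm : q * d = d * q := Nat.mul_comm q d
    set m := t - ρ - a with hmdef
    have hm : m = q * d := by omega
    have hw1 : GPpred^[m] (GPpred^[a] y1) = GPpred^[t - ρ] y1 := by
      rw [← Function.iterate_add_apply, show m + a = t - ρ by omega]
    have hw2 : GPpred^[m] (GPpred^[a] y2) = GPpred^[t - ρ] y2 := by
      rw [← Function.iterate_add_apply, show m + a = t - ρ by omega]
    -- the two periodic ancestors lie on a common orbit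
    obtain ⟨γ1, hγ1Γ, hγ1⟩ := memk q d (GPpred^[a] y1) hper1
    obtain ⟨γ2, hγ2Γ, hγ2⟩ := memk q d (GPpred^[a] y2) hper2
    rw [← hm] at hγ1 hγ2
    have horb : ∃ δ ∈ Γ, δ (GPpred^[a] y1) = GPpred^[a] y2 := by
      refine ⟨γ2⁻¹ * γ1, mul_mem (inv_mem hγ2Γ) hγ1Γ, ?_⟩
      rw [RelIso.mul_apply, hγ1, hw1, hz, ← hw2, ← hγ2, RelIso.inv_apply_self]
    -- conclude equality of the ancestors, then of y1 and y2, then of β1 and β2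
    have hweq : GPpred^[q * d] (GPpred^[a] y1) = GPpred^[q * d] (GPpred^[a] y2) := by
      rw [← hm, hw1, hw2, hz]
    have hanc : GPpred^[a] y1 = GPpred^[a] y2 := injk q d _ _ horb hper1 hweq
    have hy : y1 = y2 := by
      apply GPaux.bits_inj a y1 y2 hanc
      intro j hj
      exact congrFun hyb ⟨j, by omega⟩
    have hlist : List.ofFn β1 = List.ofFn β2 :=
      GPaux.desc_inj GPaux.v0 _ _ (by simp) (by rw [← hy1, ← hy2, hy])
    exact List.ofFn_injective hlist
  obtain ⟨Ψ, hinjΨ⟩ := hinj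
  have hcard := Fintype.card_le_of_injective Ψ hinjΨ
  rw [Fintype.card_fun] at hcard
  simp only [Fintype.card_fin, Fintype.card_bool, ← hC] at hcard
  have h2 : C < 2 ^ t :=
    lt_of_lt_of_le (Nat.lt_two_pow_self (n := C)) (Nat.pow_le_pow_right (by norm_num) (by omega))
  omega

/-- `GP` admits no unimodular graph height function: for every graph
height function `(h', Γ)` on `GP` there are vertices `u`, `v` with `v` in the `Γ`-orbit
of `u` and `|Γ_u v| ≠ |Γ_v u|`. -/
theorem statement_14 (h' : GPVertex → ℤ) (Γ : Subgroup (GP ≃g GP))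
    (hghf : IsGraphHeightFunction GP h' Γ) :
    ∃ u v : GPVertex, (∃ γ ∈ Γ, γ u = v) ∧
      Nat.card {w : GPVertex | ∃ γ ∈ Γ, γ u = u ∧ γ v = w} ≠
        Nat.card {w : GPVertex | ∃ γ ∈ Γ, γ v = v ∧ γ u = w} :=
  GPaux.no_unimodular Γ hghf.1
end
end
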